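/- Let K be an A-field and Υ a triangular t-module of dimension n over K with diagonal Drinfeld modules ψ_1,…,ψ_n of ranks r_1,…,r_n. Then there exist a finite field extension L of K and a lower triangular matrix V ∈ Mat_n(L{τ}) all of whose diagonal entries equal 1 (so V is invertible in Mat_n(L{τ})) such that V·Υ_t·V^{−1} is again lower triangular with the same diagonal entries ψ_{n,t},…,ψ_{1,t}, and every below-diagonal entry of V·Υ_t·V^{−1} has τ-degree strictly smaller than max(r_i,r_j), where ψ_i is the Drinfeld module occupying the diagonal position of that entry's row and ψ_j the one occupying the diagonal position of that entry's column. -/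

import Mathlib

open Polynomial Matrix Finset

noncomputable section

/-- Twisted ("skew") multiplication of polynomials in `τ`, determined by the rule
`τ · c = c^q · τ`:  `(Σᵢ aᵢτ^i) · (Σⱼ bⱼτ^j) = Σ_{i,j} aᵢ bⱼ^(q^i) τ^(i+j)`. -/
def twMul {K : Type*} [Field K] (q : ℕ) (f g : Polynomial K) : Polynomial K :=
  f.sum fun i a => g.sum fun j b => Polynomial.C (a * b ^ q ^ i) * Polynomial.X ^ (i + j)

/-- Twisted multiplication of matrices over the twisted polynomial ring `K{τ}`. -/
def twMatMul {K : Type*} [Field K] (q : ℕ) {α β γ : Type*} [Fintype β]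
    (A : Matrix α β (Polynomial K)) (B : Matrix β γ (Polynomial K)) :
    Matrix α γ (Polynomial K) :=
  Matrix.of fun i k => ∑ j, twMul q (A i j) (B j k)

section Basics

variable {F : Type*} [Field F] {q : ℕ}

theorem twMul_zero (f : F[X]) : twMul q f 0 = 0 := by
  simp [twMul, Polynomial.sum_zero_index, Polynomial.sum]

theorem zero_twMul (g : F[X]) : twMul q 0 g = 0 := by
  simp [twMul, Polynomial.sum_zero_index]

theorem add_twMul (f g h : F[X]) : twMul q (f + g) h = twMul q f h + twMul q g h := by
  unfold twMul
  rw [Polynomial.sum_add_index]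
  · intro i
    simp [Polynomial.sum]
  · intro i a b
    rw [← Polynomial.sum_add]
    congr 1; funext j c
    rw [add_mul, map_add, add_mul]

theorem monomial_twMul_monomial (hq1 : 1 ≤ q) (i j : ℕ) (a b : F) :
    twMul q (monomial i a) (monomial j b) = monomial (i + j) (a * b ^ q ^ i) := by
  unfold twMul
  rw [Polynomial.sum_monomial_index, Polynomial.sum_monomial_index,
    C_mul_X_pow_eq_monomial]
  all_goals simp [Polynomial.sum, zero_pow (show q ^ i ≠ 0 by positivity)]

variable (p s : ℕ) [Fact p.Prime] [CharP F p] (hq : q = p ^ s)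
include hq

theorem pow_q_add (i : ℕ) (x y : F) : (x + y) ^ q ^ i = x ^ q ^ i + y ^ q ^ i := by
  subst hq
  simp only [← pow_mul]
  exact add_pow_char_pow x y p (s * i)

theorem twMul_add (f g h : F[X]) : twMul q f (g + h) = twMul q f g + twMul q f h := by
  unfold twMul
  rw [← Polynomial.sum_add]
  congr 1; funext i a
  rw [Polynomial.sum_add_index]
  · intro j
    have : 1 ≤ q := by subst hq; exact Nat.one_le_pow _ _ (Fact.out (p := p.Prime)).pos
    rw [zero_pow (by positivity), mul_zero, map_zero, zero_mul]
  · intro j b c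
    rw [pow_q_add p s hq, mul_add, map_add, add_mul]

omit hq
include hq

theorem twMul_neg (f g : F[X]) : twMul q f (-g) = -twMul q f g := by
  have h := twMul_add p s hq f g (-g)
  rw [add_neg_cancel, twMul_zero] at h
  exact (eq_neg_of_add_eq_zero_right h.symm)

omit [Fact (Nat.Prime p)] [CharP F p] hq in
theorem neg_twMul (f g : F[X]) : twMul q (-f) g = -twMul q f g := by
  have h := add_twMul (q := q) f (-f) g
  rw [add_neg_cancel, zero_twMul] at h
  exact (eq_neg_of_add_eq_zero_right h.symm)

omit hq

theorem one_twMul (hq1 : 1 ≤ q) (g : F[X]) : twMul q 1 g = g := by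
  unfold twMul
  rw [← Polynomial.monomial_zero_one, Polynomial.sum_monomial_index]
  · have : (g.sum fun j b => C ((1:F) * b ^ q ^ 0) * X ^ (0 + j)) =
        g.sum fun j b => C b * X ^ j := by
      congr 1; funext j b; rw [pow_zero, pow_one, one_mul, zero_add]
    rw [this, Polynomial.sum_C_mul_X_pow_eq]
  · simp [Polynomial.sum]

theorem twMul_one (hq1 : 1 ≤ q) (f : F[X]) : twMul q f 1 = f := by
  unfold twMul
  have : (f.sum fun i a => (1 : F[X]).sum fun j b => C (a * b ^ q ^ i) * X ^ (i + j)) =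
      f.sum fun i a => C a * X ^ i := by
    congr 1; funext i a
    rw [← Polynomial.monomial_zero_one, Polynomial.sum_monomial_index]
    · rw [one_pow, mul_one, add_zero]
    · rw [zero_pow (show q ^ i ≠ 0 by positivity), mul_zero, map_zero, zero_mul]
  rw [this, Polynomial.sum_C_mul_X_pow_eq]

include hq

theorem twMul_assoc (f g h : F[X]) :
    twMul q (twMul q f g) h = twMul q f (twMul q g h) := by
  have hq1 : 1 ≤ q := by
    subst hq; exact Nat.one_le_pow _ _ (Fact.out (p := p.Prime)).pos
  induction f using Polynomial.induction_on' with
  | add u v hu hv => rw [add_twMul, add_twMul, add_twMul, hu, hv]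
  | monomial i a =>
    induction g using Polynomial.induction_on' with
    | add u v hu hv =>
        rw [twMul_add p s hq, add_twMul, add_twMul, hu, hv, twMul_add p s hq]
    | monomial j b =>
      induction h using Polynomial.induction_on' with
      | add u v hu hv =>
          rw [twMul_add p s hq, twMul_add p s hq, hu, hv, twMul_add p s hq]
      | monomial k c =>
          rw [monomial_twMul_monomial hq1, monomial_twMul_monomial hq1,
            monomial_twMul_monomial hq1, monomial_twMul_monomial hq1, add_assoc]
          congr 1
          rw [mul_pow, ← pow_mul, ← pow_add, Nat.add_comm j i, mul_assoc]

theorem map_twMul {G : Type*} [Field G] [CharP G p] (ι : F →+* G) (f g : F[X]) :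
    (twMul q f g).map ι = twMul q (f.map ι) (g.map ι) := by
  have hq1 : 1 ≤ q := by
    subst hq; exact Nat.one_le_pow _ _ (Fact.out (p := p.Prime)).pos
  induction f using Polynomial.induction_on' with
  | add u v hu hv => rw [add_twMul, Polynomial.map_add, Polynomial.map_add, hu, hv, add_twMul]
  | monomial i a =>
    induction g using Polynomial.induction_on' with
    | add u v hu hv =>
        rw [twMul_add p s hq, Polynomial.map_add, Polynomial.map_add, hu, hv,
          twMul_add p s hq]
    | monomial j b =>
        rw [monomial_twMul_monomial hq1, Polynomial.map_monomial, Polynomial.map_monomial,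
          Polynomial.map_monomial, monomial_twMul_monomial hq1]
        simp

theorem coeff_twMul_monomial_left (m : ℕ) (c : F) (g : F[X]) (k : ℕ) :
    (twMul q (monomial m c) g).coeff k =
      if m ≤ k then c * g.coeff (k - m) ^ q ^ m else 0 := by
  have hq1 : 1 ≤ q := by
    subst hq; exact Nat.one_le_pow _ _ (Fact.out (p := p.Prime)).pos
  induction g using Polynomial.induction_on' with
  | add u v hu hv =>
      rw [twMul_add p s hq, coeff_add, hu, hv]
      split_ifs with hmk
      · rw [coeff_add, pow_q_add p s hq, mul_add]
      · rw [add_zero]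
  | monomial j b =>
      rw [monomial_twMul_monomial hq1, coeff_monomial, coeff_monomial]
      split_ifs with h1 h2 h3 <;>
        first
          | rfl
          | (exfalso; omega)
          | (rw [zero_pow (show q ^ m ≠ 0 by positivity), mul_zero])

omit hq

theorem coeff_twMul_monomial_right (hq1 : 1 ≤ q) (f : F[X]) (m : ℕ) (c : F) (k : ℕ) :
    (twMul q f (monomial m c)).coeff k =
      if m ≤ k then f.coeff (k - m) * c ^ q ^ (k - m) else 0 := by
  induction f using Polynomial.induction_on' with
  | add u v hu hv =>
      rw [add_twMul, coeff_add, hu, hv]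
      split_ifs with hmk
      · rw [coeff_add, add_mul]
      · rw [add_zero]
  | monomial i a =>
      rw [monomial_twMul_monomial hq1, coeff_monomial, coeff_monomial]
      split_ifs with h1 h2 h3 <;>
        first
          | rfl
          | (exfalso; omega)
          | (rw [h3])
          | (rw [zero_mul])

end Basics

section MatBasics

variable {F : Type*} [Field F] {q p s : ℕ} [Fact p.Prime] [CharP F p]
variable {n : ℕ}

theorem sum_twMul {β : Type*} (t : Finset β) (g : β → F[X]) (f : F[X]) :
    twMul q (∑ b ∈ t, g b) f = ∑ b ∈ t, twMul q (g b) f := by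
  classical
  induction t using Finset.induction_on with
  | empty => simp [zero_twMul]
  | @insert _ _ hb ih => rw [Finset.sum_insert hb, Finset.sum_insert hb, add_twMul, ih]

theorem twMul_sum (hq : q = p ^ s) {β : Type*} (t : Finset β) (f : F[X]) (g : β → F[X]) :
    twMul q f (∑ b ∈ t, g b) = ∑ b ∈ t, twMul q f (g b) := by
  classical
  induction t using Finset.induction_on with
  | empty => simp [twMul_zero]
  | @insert _ _ hb ih => rw [Finset.sum_insert hb, Finset.sum_insert hb, twMul_add p s hq, ih]

theorem twMatMul_apply {A B : Matrix (Fin n) (Fin n) F[X]} (i k : Fin n) :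
    twMatMul q A B i k = ∑ j, twMul q (A i j) (B j k) := rfl

theorem twMatMul_add_left (A B C : Matrix (Fin n) (Fin n) F[X]) :
    twMatMul q (A + B) C = twMatMul q A C + twMatMul q B C := by
  ext i k
  simp only [twMatMul, Matrix.of_apply, Matrix.add_apply, add_twMul]
  rw [Finset.sum_add_distrib]

theorem twMatMul_add_right (hq : q = p ^ s) (A B C : Matrix (Fin n) (Fin n) F[X]) :
    twMatMul q A (B + C) = twMatMul q A B + twMatMul q A C := by
  ext i k
  simp only [twMatMul, Matrix.of_apply, Matrix.add_apply, twMul_add p s hq]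
  rw [Finset.sum_add_distrib]

theorem twMatMul_sub_right (hq : q = p ^ s) (A B C : Matrix (Fin n) (Fin n) F[X]) :
    twMatMul q A (B - C) = twMatMul q A B - twMatMul q A C := by
  ext i k
  simp only [twMatMul, Matrix.of_apply, Matrix.sub_apply]
  have : ∀ j, twMul q (A i j) (B j k - C j k) = twMul q (A i j) (B j k) - twMul q (A i j) (C j k) := by
    intro j
    rw [sub_eq_add_neg, twMul_add p s hq, twMul_neg p s hq, ← sub_eq_add_neg]
  rw [Finset.sum_congr rfl fun j _ => this j, Finset.sum_sub_distrib]

theorem sub_twMatMul (A B C : Matrix (Fin n) (Fin n) F[X]) :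
    twMatMul q (A - B) C = twMatMul q A C - twMatMul q B C := by
  ext i k
  simp only [twMatMul, Matrix.of_apply, Matrix.sub_apply]
  have : ∀ j, twMul q (A i j - B i j) (C j k) = twMul q (A i j) (C j k) - twMul q (B i j) (C j k) := by
    intro j
    rw [sub_eq_add_neg, add_twMul, neg_twMul, ← sub_eq_add_neg]
  rw [Finset.sum_congr rfl fun j _ => this j, Finset.sum_sub_distrib]

theorem one_twMatMul (hq1 : 1 ≤ q) (A : Matrix (Fin n) (Fin n) F[X]) :
    twMatMul q 1 A = A := by
  ext i k
  simp only [twMatMul, Matrix.of_apply, Matrix.one_apply]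
  have : ∀ j, twMul q (if i = j then (1:F[X]) else 0) (A j k)
      = if i = j then A j k else 0 := by
    intro j
    by_cases h : i = j <;> simp [h, one_twMul hq1, zero_twMul]
  rw [Finset.sum_congr rfl fun j _ => this j, Finset.sum_ite_eq, if_pos (Finset.mem_univ i)]

theorem twMatMul_one (hq1 : 1 ≤ q) (A : Matrix (Fin n) (Fin n) F[X]) :
    twMatMul q A 1 = A := by
  ext i k
  simp only [twMatMul, Matrix.of_apply, Matrix.one_apply]
  have : ∀ j, twMul q (A i j) (if j = k then (1:F[X]) else 0)
      = if j = k then A i k else 0 := by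
    intro j
    by_cases h : j = k <;> simp [h, twMul_one hq1, twMul_zero]
  rw [Finset.sum_congr rfl fun j _ => this j, Finset.sum_ite_eq', if_pos (Finset.mem_univ k)]

theorem twMatMul_assoc (hq : q = p ^ s) (A B C : Matrix (Fin n) (Fin n) F[X]) :
    twMatMul q (twMatMul q A B) C = twMatMul q A (twMatMul q B C) := by
  refine Matrix.ext fun i l => ?_
  simp only [twMatMul, Matrix.of_apply]
  calc ∑ k, twMul q (∑ j, twMul q (A i j) (B j k)) (C k l)
      = ∑ k, ∑ j, twMul q (twMul q (A i j) (B j k)) (C k l) := by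
        exact Finset.sum_congr rfl fun k _ => sum_twMul _ _ _
    _ = ∑ j, ∑ k, twMul q (A i j) (twMul q (B j k) (C k l)) := by
        rw [Finset.sum_comm]
        exact Finset.sum_congr rfl fun j _ => Finset.sum_congr rfl fun k _ =>
          twMul_assoc p s hq _ _ _
    _ = ∑ j, twMul q (A i j) (∑ k, twMul q (B j k) (C k l)) := by
        exact Finset.sum_congr rfl fun j _ => (twMul_sum hq _ _ _).symm

theorem map_twMatMul (hq : q = p ^ s) {G : Type*} [Field G] [CharP G p] (ι : F →+* G)
    (A B : Matrix (Fin n) (Fin n) F[X]) :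
    (twMatMul q A B).map (Polynomial.map ι)
      = twMatMul q (A.map (Polynomial.map ι)) (B.map (Polynomial.map ι)) := by
  refine Matrix.ext fun i k => ?_
  simp only [twMatMul, Matrix.map_apply, Matrix.of_apply]
  rw [show Polynomial.map ι = ⇑(Polynomial.mapRingHom ι) from rfl, map_sum]
  simp only [Polynomial.coe_mapRingHom]
  exact Finset.sum_congr rfl fun j _ => map_twMul p s hq ι _ _

/-- The "elementary" matrix with single entry `e` at position `(a, b)`. -/
def elemM (a b : Fin n) (e : F[X]) : Matrix (Fin n) (Fin n) F[X] :=
  Matrix.of fun i j => if i = a ∧ j = b then e else 0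

theorem elemM_twMatMul (hq1 : 1 ≤ q) (a b : Fin n) (e : F[X]) (A : Matrix (Fin n) (Fin n) F[X]) :
    twMatMul q (elemM a b e) A = Matrix.of fun i k => if i = a then twMul q e (A b k) else 0 := by
  ext i k
  simp only [twMatMul, Matrix.of_apply, elemM]
  by_cases h : i = a
  · subst h
    rw [if_pos rfl]
    have : ∀ j, twMul q (if i = i ∧ j = b then e else 0) (A j k)
        = if j = b then twMul q e (A j k) else 0 := by
      intro j
      by_cases hj : j = b <;> simp [hj, zero_twMul]
    rw [Finset.sum_congr rfl fun j _ => this j, Finset.sum_ite_eq',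
      if_pos (Finset.mem_univ b)]
  · rw [if_neg h]
    have : ∀ j, twMul q (if i = a ∧ j = b then e else 0) (A j k) = 0 := by
      intro j
      rw [if_neg (by tauto), zero_twMul]
    rw [Finset.sum_congr rfl fun j _ => this j, Finset.sum_const_zero]

theorem twMatMul_elemM (a b : Fin n) (e : F[X]) (A : Matrix (Fin n) (Fin n) F[X]) :
    twMatMul q A (elemM a b e) = Matrix.of fun i k => if k = b then twMul q (A i a) e else 0 := by
  ext i k
  simp only [twMatMul, Matrix.of_apply, elemM]
  by_cases h : k = b
  · subst h
    rw [if_pos rfl]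
    have : ∀ j, twMul q (A i j) (if j = a ∧ k = k then e else 0)
        = if j = a then twMul q (A i a) e else 0 := by
      intro j
      by_cases hj : j = a <;> simp [hj, twMul_zero]
    rw [Finset.sum_congr rfl fun j _ => this j, Finset.sum_ite_eq',
      if_pos (Finset.mem_univ a)]
  · rw [if_neg h]
    have : ∀ j, twMul q (A i j) (if j = a ∧ k = b then e else 0) = 0 := by
      intro j
      rw [if_neg (by tauto), twMul_zero]
    rw [Finset.sum_congr rfl fun j _ => this j, Finset.sum_const_zero]

end MatBasics

section Reduce

variable {F : Type*} [Field F] [IsAlgClosed F] {q p s : ℕ} [Fact p.Prime] [CharP F p]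

theorem reduce_once (hs : 0 < s) (hq : q = p ^ s) (φ ρ δ : F[X]) (rφ rρ : ℕ)
    (hφd : φ.natDegree = rφ) (hφc : φ.coeff rφ ≠ 0) (hrφ : 1 ≤ rφ)
    (hρd : ρ.natDegree = rρ) (hρc : ρ.coeff rρ ≠ 0) (hrρ : 1 ≤ rρ)
    (hδ0 : δ ≠ 0) (hd : max rφ rρ ≤ δ.natDegree) :
    ∃ e : F[X],
      (δ + twMul q e ρ - twMul q φ e).degree < δ.degree := by
  have hq1 : 1 ≤ q := by
    subst hq; exact Nat.one_le_pow _ _ (Fact.out (p := p.Prime)).pos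
  have hq2 : 2 ≤ q := by
    subst hq
    calc 2 ≤ p := (Fact.out (p := p.Prime)).two_le
    _ = p ^ 1 := (pow_one p).symm
    _ ≤ p ^ s := Nat.pow_le_pow_right (Fact.out (p := p.Prime)).pos hs
  set d := δ.natDegree with hdd
  set R := max rφ rρ with hR
  set m := d - R with hm
  have hmR : m + R = d := by omega
  -- the polynomial whose root provides the coefficient of `e`
  set P : F[X] := C (δ.coeff d) + (if rρ = R then C (ρ.coeff rρ ^ q ^ m) * X else 0)
      - (if rφ = R then C (φ.coeff rφ) * X ^ q ^ rφ else 0) with hP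
  have hPdeg : P.degree ≠ 0 := by
    rcases eq_or_ne rφ R with hcase | hcase
    · have h1 : (C (δ.coeff d) + (if rρ = R then C (ρ.coeff rρ ^ q ^ m) * X else 0)).degree ≤ 1 := by
        refine (degree_add_le _ _).trans (max_le (degree_C_le.trans (by norm_num)) ?_)
        split_ifs
        · calc (C (ρ.coeff rρ ^ q ^ m) * X : F[X]).degree
              ≤ (C (ρ.coeff rρ ^ q ^ m) : F[X]).degree + (X : F[X]).degree :=
                degree_mul_le _ _
          _ ≤ 0 + 1 := add_le_add degree_C_le degree_X_le
          _ = 1 := by norm_num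
        · simp
      have h2 : (C (φ.coeff rφ) * X ^ q ^ rφ : F[X]).degree = ((q ^ rφ : ℕ) : WithBot ℕ) :=
        degree_C_mul_X_pow _ hφc
      have h3 : (1 : WithBot ℕ) < ((q ^ rφ : ℕ) : WithBot ℕ) := by
        have : 1 < q ^ rφ := by
          calc 1 < q := hq2
          _ = q ^ 1 := (pow_one q).symm
          _ ≤ q ^ rφ := Nat.pow_le_pow_right (by omega) hrφ
        exact_mod_cast this
      have h4 : P.degree = ((q ^ rφ : ℕ) : WithBot ℕ) := by
        rw [hP, if_pos hcase,
          degree_sub_eq_right_of_degree_lt (by rw [h2]; exact lt_of_le_of_lt h1 h3), h2]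
      rw [h4]
      intro hcontra
      have hne : q ^ rφ ≠ 0 := by positivity
      exact hne (by exact_mod_cast hcontra)
    · have hρR : rρ = R := by
        rcases max_choice rφ rρ with h | h <;> omega
      rw [hP, if_pos hρR, if_neg hcase, sub_zero, add_comm]
      have : (C (ρ.coeff rρ ^ q ^ m) * X + C (δ.coeff d)).degree = 1 :=
        degree_linear (pow_ne_zero _ hρc)
      rw [this]
      norm_num
  obtain ⟨c, hc⟩ := IsAlgClosed.exists_root P hPdeg
  have heq : δ.coeff d + (if rρ = R then ρ.coeff rρ ^ q ^ m * c else 0)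
      - (if rφ = R then φ.coeff rφ * c ^ q ^ rφ else 0) = 0 := by
    have := hc
    rw [IsRoot.def, hP] at this
    simpa [apply_ite (Polynomial.eval c)] using this
  refine ⟨monomial m c, ?_⟩
  rw [degree_eq_natDegree hδ0]
  rw [Polynomial.degree_lt_iff_coeff_zero]
  intro k hk
  have hk' : d ≤ k := by exact_mod_cast hk
  have hmk : m ≤ k := by omega
  rw [coeff_sub, coeff_add, coeff_twMul_monomial_left p s hq, coeff_twMul_monomial_right hq1,
    if_pos hmk, if_pos hmk]
  rcases eq_or_lt_of_le hk' with hkd | hkd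
  · -- k = d
    obtain rfl : k = d := hkd.symm
    have hkm : d - m = R := by omega
    rw [hkm]
    have h5 : ρ.coeff R = if rρ = R then ρ.coeff rρ else 0 := by
      split_ifs with h
      · rw [h]
      · exact coeff_eq_zero_of_natDegree_lt (by omega)
    have h6 : φ.coeff R = if rφ = R then φ.coeff rφ else 0 := by
      split_ifs with h
      · rw [h]
      · exact coeff_eq_zero_of_natDegree_lt (by omega)
    rw [h5, h6]
    split_ifs at heq ⊢ with h1 h2 h2
    · rw [h2] at heq; rw [h2]; linear_combination heq
    · linear_combination heq
    · rw [h2] at heq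
      rw [h2, zero_pow (show q ^ m ≠ 0 by positivity), mul_zero]
      linear_combination heq
    · rw [zero_pow (show q ^ m ≠ 0 by positivity), mul_zero, zero_mul]
      linear_combination heq
  · -- d < k
    have h7 : δ.coeff k = 0 := coeff_eq_zero_of_natDegree_lt hkd
    have h8 : ρ.coeff (k - m) = 0 := coeff_eq_zero_of_natDegree_lt (by omega)
    have h9 : φ.coeff (k - m) = 0 := coeff_eq_zero_of_natDegree_lt (by omega)
    rw [h7, h8, h9, zero_pow (show q ^ m ≠ 0 by positivity), mul_zero, zero_mul]
    ring

end Reduce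

section Conj

variable {F : Type*} [Field F] {q p s : ℕ} [Fact p.Prime] [CharP F p] {n : ℕ}

/-- `Υ'` is obtained from `Υ` by conjugation with a unipotent lower triangular matrix. -/
def Conjugate (q : ℕ) (Υ Υ' : Matrix (Fin n) (Fin n) F[X]) : Prop :=
  ∃ V W : Matrix (Fin n) (Fin n) F[X],
    (∀ i j : Fin n, i < j → V i j = 0) ∧ (∀ k : Fin n, V k k = 1) ∧
    twMatMul q V W = 1 ∧ twMatMul q W V = 1 ∧
    Υ' = twMatMul q (twMatMul q V Υ) W

theorem conjugate_refl (hq1 : 1 ≤ q) (Υ : Matrix (Fin n) (Fin n) F[X]) :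
    Conjugate q Υ Υ := by
  refine ⟨1, 1, fun i j hij => Matrix.one_apply_ne (Fin.ne_of_lt hij), fun k => Matrix.one_apply_eq k,
    twMatMul_one hq1 1, twMatMul_one hq1 1, ?_⟩
  rw [one_twMatMul hq1, twMatMul_one hq1]

theorem twMatMul_lowerTri {A B : Matrix (Fin n) (Fin n) F[X]}
    (hA : ∀ i j : Fin n, i < j → A i j = 0) (hB : ∀ i j : Fin n, i < j → B i j = 0) :
    ∀ i j : Fin n, i < j → twMatMul q A B i j = 0 := by
  intro i j hij
  rw [twMatMul_apply]
  refine Finset.sum_eq_zero fun k _ => ?_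
  rcases lt_or_ge i k with h | h
  · rw [hA i k h, zero_twMul]
  · rw [hB k j (lt_of_le_of_lt h hij), twMul_zero]

theorem twMatMul_diag_one (hq1 : 1 ≤ q) {A B : Matrix (Fin n) (Fin n) F[X]}
    (hA : ∀ i j : Fin n, i < j → A i j = 0) (hB : ∀ i j : Fin n, i < j → B i j = 0)
    (hAd : ∀ k : Fin n, A k k = 1) (hBd : ∀ k : Fin n, B k k = 1) :
    ∀ k : Fin n, twMatMul q A B k k = 1 := by
  intro k
  rw [twMatMul_apply]
  rw [Finset.sum_eq_single k]
  · rw [hAd k, hBd k, one_twMul hq1]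
  · intro j _ hjk
    rcases lt_or_ge k j with h | h
    · rw [hA k j h, zero_twMul]
    · rw [hB j k (lt_of_le_of_ne h hjk), twMul_zero]
  · intro h
    exact absurd (Finset.mem_univ k) h

theorem conjugate_trans (hq : q = p ^ s) {Υ₁ Υ₂ Υ₃ : Matrix (Fin n) (Fin n) F[X]}
    (h12 : Conjugate q Υ₁ Υ₂) (h23 : Conjugate q Υ₂ Υ₃) : Conjugate q Υ₁ Υ₃ := by
  have hq1 : 1 ≤ q := by
    subst hq; exact Nat.one_le_pow _ _ (Fact.out (p := p.Prime)).pos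
  obtain ⟨V₁, W₁, hV₁t, hV₁d, hVW₁, hWV₁, hc₁⟩ := h12
  obtain ⟨V₂, W₂, hV₂t, hV₂d, hVW₂, hWV₂, hc₂⟩ := h23
  refine ⟨twMatMul q V₂ V₁, twMatMul q W₁ W₂,
    twMatMul_lowerTri hV₂t hV₁t, twMatMul_diag_one hq1 hV₂t hV₁t hV₂d hV₁d, ?_, ?_, ?_⟩
  · calc twMatMul q (twMatMul q V₂ V₁) (twMatMul q W₁ W₂)
        = twMatMul q V₂ (twMatMul q (twMatMul q V₁ W₁) W₂) := by
          rw [twMatMul_assoc hq, twMatMul_assoc hq]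
    _ = 1 := by rw [hVW₁, one_twMatMul hq1, hVW₂]
  · calc twMatMul q (twMatMul q W₁ W₂) (twMatMul q V₂ V₁)
        = twMatMul q W₁ (twMatMul q (twMatMul q W₂ V₂) V₁) := by
          rw [twMatMul_assoc hq, twMatMul_assoc hq]
    _ = 1 := by rw [hWV₂, one_twMatMul hq1, hWV₁]
  · rw [hc₂, hc₁]
    simp only [twMatMul_assoc hq]

end Conj

section Elem

variable {F : Type*} [Field F] {q p s : ℕ} [Fact p.Prime] [CharP F p] {n : ℕ}

theorem elemM_lowerTri {a b : Fin n} (hba : b < a) (e : F[X]) :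
    ∀ i j : Fin n, i < j → elemM a b e i j = 0 := by
  intro i j hij
  show (if i = a ∧ j = b then e else 0) = 0
  rw [if_neg]
  rintro ⟨rfl, rfl⟩
  exact absurd hij (not_lt_of_gt hba)

theorem elem_conj (hq : q = p ^ s) {a b : Fin n} (hba : b < a) (e : F[X])
    (Υ : Matrix (Fin n) (Fin n) F[X]) (hΥba : Υ b a = 0) :
    Conjugate q Υ (Matrix.of fun i j => Υ i j
      + (if i = a then twMul q e (Υ b j) else 0)
      - (if j = b then twMul q (Υ i a) e else 0)) := by
  have hq1 : 1 ≤ q := by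
    subst hq; exact Nat.one_le_pow _ _ (Fact.out (p := p.Prime)).pos
  have hab : a ≠ b := (Fin.ne_of_lt hba).symm
  set E : Matrix (Fin n) (Fin n) F[X] := elemM a b e with hE
  have hEE : twMatMul q E E = 0 := by
    rw [hE, twMatMul_elemM]
    refine Matrix.ext fun i k => ?_
    show (if k = b then twMul q (elemM a b e i a) e else 0) = 0
    have : elemM a b e i a = 0 := by
      show (if i = a ∧ a = b then e else 0) = 0
      rw [if_neg (by tauto)]
    rw [this, zero_twMul, ite_self]
  refine ⟨1 + E, 1 - E, ?_, ?_, ?_, ?_, ?_⟩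
  · intro i j hij
    rw [Matrix.add_apply, Matrix.one_apply_ne (Fin.ne_of_lt hij), hE,
      elemM_lowerTri hba e i j hij, add_zero]
  · intro k
    rw [Matrix.add_apply, Matrix.one_apply_eq]
    have : E k k = 0 := by
      rw [hE]
      show (if k = a ∧ k = b then e else 0) = 0
      rw [if_neg (by rintro ⟨rfl, rfl⟩; exact hab rfl)]
    rw [this, add_zero]
  · rw [twMatMul_add_left, one_twMatMul hq1, twMatMul_sub_right hq, twMatMul_one hq1, hEE,
      sub_zero]
    abel
  · rw [sub_twMatMul, one_twMatMul hq1, twMatMul_add_right hq, twMatMul_one hq1, hEE,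
      add_zero]
    abel
  · have hM : twMatMul q (1 + E) Υ
        = Matrix.of fun i k => Υ i k + (if i = a then twMul q e (Υ b k) else 0) := by
      rw [twMatMul_add_left, one_twMatMul hq1, hE, elemM_twMatMul hq1]
      refine Matrix.ext fun i k => ?_
      simp [Matrix.add_apply]
    rw [twMatMul_sub_right hq, twMatMul_one hq1, hE, twMatMul_elemM, hM]
    refine Matrix.ext fun i j => ?_
    simp only [Matrix.sub_apply, Matrix.of_apply, hΥba, twMul_zero, ite_self, add_zero]

end Elem

section Fix

variable {F : Type*} [Field F] [IsAlgClosed F] {q p s : ℕ} [Fact p.Prime] [CharP F p] {n : ℕ}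

theorem fix_entry (hs : 0 < s) (hq : q = p ^ s) (D : Fin n → F[X]) (R : Fin n → ℕ)
    (hDdeg : ∀ k, (D k).natDegree = R k) (hDc : ∀ k, (D k).coeff (R k) ≠ 0)
    (hR1 : ∀ k, 1 ≤ R k) (a b : Fin n) (hba : b < a) :
    ∀ d : ℕ, ∀ Υ : Matrix (Fin n) (Fin n) F[X],
      (∀ i j : Fin n, i < j → Υ i j = 0) → (∀ k : Fin n, Υ k k = D k) →
      (Υ a b).natDegree ≤ d →
      ∃ Υ', Conjugate q Υ Υ' ∧ (∀ i j : Fin n, i < j → Υ' i j = 0) ∧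
        (∀ k : Fin n, Υ' k k = D k) ∧
        (Υ' a b).natDegree < max (R a) (R b) ∧
        (∀ i j : Fin n,
          ((i : ℕ) - (j : ℕ) < (a : ℕ) - (b : ℕ) ∨
            ((i : ℕ) - (j : ℕ) = (a : ℕ) - (b : ℕ) ∧ (i, j) ≠ (a, b))) →
          Υ' i j = Υ i j) := by
  have hq1 : 1 ≤ q := by
    subst hq; exact Nat.one_le_pow _ _ (Fact.out (p := p.Prime)).pos
  have hba' : (b : ℕ) < (a : ℕ) := hba
  intro d
  induction d using Nat.strong_induction_on with
  | _ d IH =>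
  intro Υ hLT hdiag hdeg
  by_cases hlt : (Υ a b).natDegree < max (R a) (R b)
  · exact ⟨Υ, conjugate_refl hq1 Υ, hLT, hdiag, hlt, fun i j _ => rfl⟩
  push_neg at hlt
  have hab0 : Υ a b ≠ 0 := by
    intro h
    rw [h, natDegree_zero] at hlt
    have := hR1 a
    omega
  obtain ⟨e, he⟩ := reduce_once hs hq (D a) (D b) (Υ a b) (R a) (R b) (hDdeg a) (hDc a)
    (hR1 a) (hDdeg b) (hDc b) (hR1 b) hab0 hlt
  set Υ₁ : Matrix (Fin n) (Fin n) F[X] := Matrix.of fun i j => Υ i j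
      + (if i = a then twMul q e (Υ b j) else 0)
      - (if j = b then twMul q (Υ i a) e else 0) with hΥ₁
  have hconj : Conjugate q Υ Υ₁ := elem_conj hq hba e Υ (hLT b a hba)
  have hentry : ∀ i j : Fin n, Υ₁ i j = Υ i j
      + (if i = a then twMul q e (Υ b j) else 0)
      - (if j = b then twMul q (Υ i a) e else 0) := fun i j => rfl
  have h1LT : ∀ i j : Fin n, i < j → Υ₁ i j = 0 := by
    intro i j hij
    rw [hentry, hLT i j hij]
    have hx : (if i = a then twMul q e (Υ b j) else 0) = 0 := by
      split_ifs with h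
      · have hbj : b < j := by
          have : b < i := by rw [h]; exact hba
          exact this.trans hij
        rw [hLT b j hbj, twMul_zero]
      · rfl
    have hy : (if j = b then twMul q (Υ i a) e else 0) = 0 := by
      split_ifs with h
      · have hia : i < a := by
          have : i < b := by rw [← h]; exact hij
          exact this.trans hba
        rw [hLT i a hia, zero_twMul]
      · rfl
    rw [hx, hy, add_zero, sub_zero]
  have h1diag : ∀ k : Fin n, Υ₁ k k = D k := by
    intro k
    rw [hentry]
    have hx : (if k = a then twMul q e (Υ b k) else 0) = 0 := by
      split_ifs with h
      · rw [h, hLT b a hba, twMul_zero]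
      · rfl
    have hy : (if k = b then twMul q (Υ k a) e else 0) = 0 := by
      split_ifs with h
      · rw [h, hLT b a hba, zero_twMul]
      · rfl
    rw [hx, hy, add_zero, sub_zero, hdiag]
  have hdlt : (Υ₁ a b).degree < (Υ a b).degree := by
    rw [hentry, if_pos rfl, if_pos rfl, hdiag a, hdiag b]
    exact he
  have hkeep : ∀ i j : Fin n,
      ((i : ℕ) - (j : ℕ) < (a : ℕ) - (b : ℕ) ∨
        ((i : ℕ) - (j : ℕ) = (a : ℕ) - (b : ℕ) ∧ (i, j) ≠ (a, b))) →
      Υ₁ i j = Υ i j := by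
    intro i j hcond
    rw [hentry]
    have hx : (if i = a then twMul q e (Υ b j) else 0) = 0 := by
      split_ifs with h
      · have hia : (i : ℕ) = (a : ℕ) := by rw [h]
        have hbj : b < j := by
          rcases lt_or_ge b j with hh | hh
          · exact hh
          · exfalso
            have hh' : (j : ℕ) ≤ (b : ℕ) := hh
            rcases hcond with hc | ⟨hc, hne⟩
            · omega
            · have hjb : (j : ℕ) = (b : ℕ) := by omega
              exact hne (by rw [h, Fin.ext hjb])
        rw [hLT b j hbj, twMul_zero]
      · rfl
    have hy : (if j = b then twMul q (Υ i a) e else 0) = 0 := by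
      split_ifs with h
      · have hjb : (j : ℕ) = (b : ℕ) := by rw [h]
        have hia : i < a := by
          rcases lt_or_ge i a with hh | hh
          · exact hh
          · exfalso
            have hh' : (a : ℕ) ≤ (i : ℕ) := hh
            rcases hcond with hc | ⟨hc, hne⟩
            · omega
            · have hiaeq : (i : ℕ) = (a : ℕ) := by omega
              exact hne (by rw [h, Fin.ext hiaeq])
        rw [hLT i a hia, zero_twMul]
      · rfl
    rw [hx, hy, add_zero, sub_zero]
  rcases eq_or_ne (Υ₁ a b) 0 with h0 | h0
  · refine ⟨Υ₁, hconj, h1LT, h1diag, ?_, hkeep⟩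
    rw [h0, natDegree_zero]
    have := hR1 a
    omega
  · have hd1 : (Υ₁ a b).natDegree < (Υ a b).natDegree :=
      natDegree_lt_natDegree h0 hdlt
    obtain ⟨Υ₂, hc2, h2LT, h2diag, h2deg, h2keep⟩ :=
      IH _ (lt_of_lt_of_le hd1 hdeg) Υ₁ h1LT h1diag le_rfl
    exact ⟨Υ₂, conjugate_trans hq hconj hc2, h2LT, h2diag, h2deg,
      fun i j hcond => (h2keep i j hcond).trans (hkeep i j hcond)⟩

end Fix

section Diag

variable {F : Type*} [Field F] [IsAlgClosed F] {q p s : ℕ} [Fact p.Prime] [CharP F p] {n : ℕ}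

theorem reduce_diag (hs : 0 < s) (hq : q = p ^ s) (D : Fin n → F[X]) (R : Fin n → ℕ)
    (hDdeg : ∀ k, (D k).natDegree = R k) (hDc : ∀ k, (D k).coeff (R k) ≠ 0)
    (hR1 : ∀ k, 1 ≤ R k) (K : ℕ) :
    ∀ Υ : Matrix (Fin n) (Fin n) F[X],
      (∀ i j : Fin n, i < j → Υ i j = 0) → (∀ k : Fin n, Υ k k = D k) →
      ∃ Υ', Conjugate q Υ Υ' ∧ (∀ i j : Fin n, i < j → Υ' i j = 0) ∧
        (∀ k : Fin n, Υ' k k = D k) ∧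
        (∀ a b : Fin n, b < a → (a : ℕ) - (b : ℕ) ≤ K →
          (Υ' a b).natDegree < max (R a) (R b)) := by
  have hq1 : 1 ≤ q := by
    subst hq; exact Nat.one_le_pow _ _ (Fact.out (p := p.Prime)).pos
  induction K with
  | zero =>
    intro Υ hLT hdiag
    refine ⟨Υ, conjugate_refl hq1 Υ, hLT, hdiag, fun a b hba hle => ?_⟩
    have : (b : ℕ) < (a : ℕ) := hba
    omega
  | succ K IHK =>
    intro Υ hLT hdiag
    obtain ⟨Υ₁, hc₁, hLT₁, hdiag₁, hbd₁⟩ := IHK Υ hLT hdiag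
    have inner : ∀ M : ℕ, ∀ Θ : Matrix (Fin n) (Fin n) F[X],
        (∀ i j : Fin n, i < j → Θ i j = 0) → (∀ k : Fin n, Θ k k = D k) →
        (∀ a b : Fin n, b < a → (a : ℕ) - (b : ℕ) ≤ K →
          (Θ a b).natDegree < max (R a) (R b)) →
        ∃ Θ', Conjugate q Θ Θ' ∧ (∀ i j : Fin n, i < j → Θ' i j = 0) ∧
          (∀ k : Fin n, Θ' k k = D k) ∧
          (∀ a b : Fin n, b < a → (a : ℕ) - (b : ℕ) ≤ K →
            (Θ' a b).natDegree < max (R a) (R b)) ∧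
          (∀ a b : Fin n, b < a → (a : ℕ) - (b : ℕ) = K + 1 → (a : ℕ) < M →
            (Θ' a b).natDegree < max (R a) (R b)) := by
      intro M
      induction M with
      | zero =>
        intro Θ hLTΘ hdiagΘ hbdΘ
        exact ⟨Θ, conjugate_refl hq1 Θ, hLTΘ, hdiagΘ, hbdΘ, fun a b _ _ h => by omega⟩
      | succ M IHM =>
        intro Θ hLTΘ hdiagΘ hbdΘ
        obtain ⟨Θ₁, hcΘ₁, hLTΘ₁, hdiagΘ₁, hbdΘ₁, hnewΘ₁⟩ := IHM Θ hLTΘ hdiagΘ hbdΘ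
        by_cases hM : K + 1 ≤ M ∧ M < n
        · set aM : Fin n := ⟨M, hM.2⟩ with haM
          set bM : Fin n := ⟨M - (K + 1), by omega⟩ with hbM
          have hbaM : bM < aM := by
            rw [haM, hbM, Fin.mk_lt_mk]
            omega
          have hdiffM : (aM : ℕ) - (bM : ℕ) = K + 1 := by
            rw [haM, hbM]
            simp only []
            omega
          obtain ⟨Θ₂, hcΘ₂, hLTΘ₂, hdiagΘ₂, hdegΘ₂, hkeepΘ₂⟩ :=
            fix_entry hs hq D R hDdeg hDc hR1 aM bM hbaM _ Θ₁ hLTΘ₁ hdiagΘ₁ le_rfl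
          refine ⟨Θ₂, conjugate_trans hq hcΘ₁ hcΘ₂, hLTΘ₂, hdiagΘ₂, ?_, ?_⟩
          · intro a b hba hle
            have heq : Θ₂ a b = Θ₁ a b := hkeepΘ₂ a b (Or.inl (by omega))
            rw [heq]
            exact hbdΘ₁ a b hba hle
          · intro a b hba hdiff hlt
            rcases eq_or_ne (a, b) (aM, bM) with hEq | hne
            · injection hEq with ha hb
              rw [ha, hb]
              exact hdegΘ₂
            · have haM' : (a : ℕ) < M := by
                by_contra hcon
                push_neg at hcon
                have haval : (a : ℕ) = M := by omega
                have hbval : (b : ℕ) = M - (K + 1) := by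
                  have : (b : ℕ) < (a : ℕ) := hba
                  omega
                exact hne (by rw [Fin.ext (a := a) (b := aM) haval,
                  Fin.ext (a := b) (b := bM) hbval])
              have heq : Θ₂ a b = Θ₁ a b :=
                hkeepΘ₂ a b (Or.inr ⟨by omega, hne⟩)
              rw [heq]
              exact hnewΘ₁ a b hba hdiff haM'
        · refine ⟨Θ₁, hcΘ₁, hLTΘ₁, hdiagΘ₁, hbdΘ₁, ?_⟩
          intro a b hba hdiff hlt
          have hblta : (b : ℕ) < (a : ℕ) := hba
          have haM' : (a : ℕ) < M := by
            rcases Nat.lt_or_ge (a : ℕ) M with h | h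
            · exact h
            · exfalso
              have haval : (a : ℕ) = M := by omega
              exact hM ⟨by omega, haval ▸ a.isLt⟩
          exact hnewΘ₁ a b hba hdiff haM'
    obtain ⟨Υ₂, hc₂, hLT₂, hdiag₂, hbd₂, hnew₂⟩ := inner n Υ₁ hLT₁ hdiag₁ hbd₁
    refine ⟨Υ₂, conjugate_trans hq hc₁ hc₂, hLT₂, hdiag₂, fun a b hba hle => ?_⟩
    rcases Nat.lt_or_ge ((a : ℕ) - (b : ℕ)) (K + 1) with h | h
    · exact hbd₂ a b hba (by omega)
    · exact hnew₂ a b hba (by omega) a.isLt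

end Diag

section Descend

theorem poly_descend {K F : Type*} [Field K] [Field F] [Algebra K F]
    (L : IntermediateField K F) (P : F[X]) (h : ∀ i, P.coeff i ∈ L) :
    ∃ Q : Polynomial L, Q.map (algebraMap L F) = P := by
  refine ⟨∑ i ∈ P.support, Polynomial.C (⟨P.coeff i, h i⟩ : L) * Polynomial.X ^ i, ?_⟩
  rw [Polynomial.map_sum]
  conv_rhs => rw [P.as_sum_support]
  refine Finset.sum_congr rfl fun i _ => ?_
  rw [Polynomial.map_mul, Polynomial.map_C, Polynomial.map_pow, Polynomial.map_X,
    C_mul_X_pow_eq_monomial]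
  congr 1

end Descend

/-- `ψ` is (the value at `t` of) a Drinfeld module of rank `r` over the `A`-field `(K, θ)`. -/
def IsDrinfeld {K : Type*} [Field K] (θ : K) (r : ℕ) (ψ : Polynomial K) : Prop :=
  1 ≤ r ∧ ψ.coeff 0 = θ ∧ ψ.natDegree = r ∧ ψ.coeff r ≠ 0

/-- `Υ` is (the value at `t` of) a triangular t-module of dimension `n` with diagonal
Drinfeld modules `ψ 0 = ψ₁, …, ψ (n-1) = ψₙ` of ranks `r 0, …, r (n-1)`:  `Υ` is lower
triangular and its `(k,k)` diagonal entry is `ψ k.rev` (so `ψₙ` is top-left and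
`ψ₁` is bottom-right). -/
def IsTriangular {K : Type*} [Field K] (θ : K) {n : ℕ}
    (Υ : Matrix (Fin n) (Fin n) (Polynomial K))
    (ψ : Fin n → Polynomial K) (r : Fin n → ℕ) : Prop :=
  (∀ i j : Fin n, i < j → Υ i j = 0) ∧
  (∀ k : Fin n, Υ k k = ψ k.rev) ∧
  (∀ i : Fin n, IsDrinfeld θ (r i) (ψ i))

/-- Theorem on the reduced form of a triangular t-module.
For a triangular t-module `Υ` over an `A`-field `K` there exist a finite field extension
`L/K` and a lower triangular matrix `V` over `L{τ}` with all diagonal entries `1`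
(invertible, with two–sided twisted inverse `W`) such that `V·Υ_t·V⁻¹` is again lower
triangular with the same diagonal entries, and every below-diagonal entry of `V·Υ_t·V⁻¹`
has `τ`-degree strictly smaller than `max (rᵢ, rⱼ)`, where `ψᵢ` occupies the diagonal
position of that entry's row, and `ψⱼ` that of its column. -/
theorem reduced_form_exists
    {K : Type*} [Field K] (p s q : ℕ) [Fact p.Prime] (hs : 0 < s) (hq : q = p ^ s)
    [Algebra (GaloisField p s) K] (θ : K) {n : ℕ}
    (Υ : Matrix (Fin n) (Fin n) (Polynomial K))
    (ψ : Fin n → Polynomial K) (r : Fin n → ℕ)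
    (hΥ : IsTriangular θ Υ ψ r) :
    ∃ L : IntermediateField K (AlgebraicClosure K), FiniteDimensional K L ∧
      ∃ V W : Matrix (Fin n) (Fin n) (Polynomial L),
        (∀ i j : Fin n, i < j → V i j = 0) ∧
        (∀ k : Fin n, V k k = 1) ∧
        twMatMul q V W = 1 ∧ twMatMul q W V = 1 ∧
        ∃ Υ' : Matrix (Fin n) (Fin n) (Polynomial L),
          Υ' = twMatMul q (twMatMul q V (Υ.map (Polynomial.map (algebraMap K L)))) W ∧
          (∀ i j : Fin n, i < j → Υ' i j = 0) ∧
          (∀ k : Fin n, Υ' k k = (ψ k.rev).map (algebraMap K L)) ∧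
          (∀ a b : Fin n, b < a →
            (Υ' a b).natDegree < max (r a.rev) (r b.rev)) := by
  classical
  haveI hKp : CharP K p := charP_of_injective_algebraMap
    (algebraMap (GaloisField p s) K).injective p
  set F := AlgebraicClosure K with hF
  haveI hFp : CharP F p := charP_of_injective_algebraMap (algebraMap K F).injective p
  have hq1 : 1 ≤ q := by
    subst hq; exact Nat.one_le_pow _ _ (Fact.out (p := p.Prime)).pos
  obtain ⟨hLTΥ, hdiagΥ, hDrin⟩ := hΥ
  set ΥF : Matrix (Fin n) (Fin n) F[X] := Υ.map (Polynomial.map (algebraMap K F)) with hΥF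
  set D : Fin n → F[X] := fun k => (ψ k.rev).map (algebraMap K F) with hD
  set R : Fin n → ℕ := fun k => r k.rev with hR
  have hDdeg : ∀ k, (D k).natDegree = R k := by
    intro k
    rw [hD, hR]
    rw [Polynomial.natDegree_map (algebraMap K F)]
    exact (hDrin k.rev).2.2.1
  have hDc : ∀ k, (D k).coeff (R k) ≠ 0 := by
    intro k
    rw [hD, hR, Polynomial.coeff_map]
    exact (map_ne_zero_iff _ (algebraMap K F).injective).mpr (hDrin k.rev).2.2.2
  have hR1 : ∀ k, 1 ≤ R k := fun k => (hDrin k.rev).1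
  have hLTF : ∀ i j : Fin n, i < j → ΥF i j = 0 := by
    intro i j hij
    rw [hΥF, Matrix.map_apply, hLTΥ i j hij, Polynomial.map_zero]
  have hdiagF : ∀ k : Fin n, ΥF k k = D k := by
    intro k
    rw [hΥF, Matrix.map_apply, hdiagΥ k, hD]
  obtain ⟨Υ'F, hconj, hLT', hdiag', hbound⟩ :=
    reduce_diag hs hq D R hDdeg hDc hR1 n ΥF hLTF hdiagF
  obtain ⟨VF, WF, hVt, hVd, hVW, hWV, hcform⟩ := hconj
  -- the coefficients of `VF` and `WF` generate a finite extension of `K`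
  set T : Finset F :=
    (Finset.univ.biUnion fun ij : Fin n × Fin n =>
        (VF ij.1 ij.2).support.image (VF ij.1 ij.2).coeff) ∪
    (Finset.univ.biUnion fun ij : Fin n × Fin n =>
        (WF ij.1 ij.2).support.image (WF ij.1 ij.2).coeff) with hT
  set L : IntermediateField K F := IntermediateField.adjoin K (T : Set F) with hL
  haveI hfin : FiniteDimensional K L := by
    apply IntermediateField.finiteDimensional_adjoin
    intro x _
    exact (Algebra.IsAlgebraic.isAlgebraic (R := K) x).isIntegral
  haveI hLp : CharP L p := charP_of_injective_algebraMap (algebraMap K L).injective p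
  have hmemV : ∀ i j : Fin n, ∀ m : ℕ, (VF i j).coeff m ∈ L := by
    intro i j m
    by_cases hm : m ∈ (VF i j).support
    · refine IntermediateField.subset_adjoin K (T : Set F) ?_
      rw [hT]
      simp only [Finset.coe_union, Set.mem_union, Finset.coe_biUnion, Finset.coe_univ,
        Set.mem_iUnion, Finset.mem_coe, Finset.mem_image]
      exact Or.inl ⟨(i, j), Set.mem_univ _, m, hm, rfl⟩
    · rw [Polynomial.notMem_support_iff.mp hm]
      exact zero_mem L
  have hmemW : ∀ i j : Fin n, ∀ m : ℕ, (WF i j).coeff m ∈ L := by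
    intro i j m
    by_cases hm : m ∈ (WF i j).support
    · refine IntermediateField.subset_adjoin K (T : Set F) ?_
      rw [hT]
      simp only [Finset.coe_union, Set.mem_union, Finset.coe_biUnion, Finset.coe_univ,
        Set.mem_iUnion, Finset.mem_coe, Finset.mem_image]
      exact Or.inr ⟨(i, j), Set.mem_univ _, m, hm, rfl⟩
    · rw [Polynomial.notMem_support_iff.mp hm]
      exact zero_mem L
  choose VL hVL using fun i j => poly_descend L (VF i j) (hmemV i j)
  choose WL hWL using fun i j => poly_descend L (WF i j) (hmemW i j)
  set Vmat : Matrix (Fin n) (Fin n) (Polynomial L) := Matrix.of VL with hVmat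
  set Wmat : Matrix (Fin n) (Fin n) (Polynomial L) := Matrix.of WL with hWmat
  have hinj : Function.Injective (Polynomial.map (algebraMap L F)) :=
    Polynomial.map_injective _ (algebraMap L F).injective
  have hVmap : Vmat.map (Polynomial.map (algebraMap L F)) = VF :=
    Matrix.ext fun i j => hVL i j
  have hWmap : Wmat.map (Polynomial.map (algebraMap L F)) = WF :=
    Matrix.ext fun i j => hWL i j
  have hMinj : ∀ A B : Matrix (Fin n) (Fin n) (Polynomial L),
      A.map (Polynomial.map (algebraMap L F)) = B.map (Polynomial.map (algebraMap L F)) →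
      A = B := by
    intro A B h
    refine Matrix.ext fun i j => hinj ?_
    have := congrArg (fun M => M i j) h
    simpa [Matrix.map_apply] using this
  have honemap : (1 : Matrix (Fin n) (Fin n) (Polynomial L)).map
      (Polynomial.map (algebraMap L F)) = 1 :=
    Matrix.map_one _ (Polynomial.map_zero _) (Polynomial.map_one _)
  refine ⟨L, hfin, Vmat, Wmat, ?_, ?_, ?_, ?_, ?_⟩
  · intro i j hij
    apply hinj
    rw [Polynomial.map_zero]
    have : Vmat.map (Polynomial.map (algebraMap L F)) i j = VF i j := by rw [hVmap]
    rw [Matrix.map_apply] at this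
    rw [this, hVt i j hij]
  · intro k
    apply hinj
    rw [Polynomial.map_one]
    have : Vmat.map (Polynomial.map (algebraMap L F)) k k = VF k k := by rw [hVmap]
    rw [Matrix.map_apply] at this
    rw [this, hVd k]
  · apply hMinj
    rw [map_twMatMul hq (algebraMap L F), hVmap, hWmap, hVW, honemap]
  · apply hMinj
    rw [map_twMatMul hq (algebraMap L F), hVmap, hWmap, hWV, honemap]
  · set ΥL : Matrix (Fin n) (Fin n) (Polynomial L) :=
      Υ.map (Polynomial.map (algebraMap K L)) with hΥL
    set Υ'L : Matrix (Fin n) (Fin n) (Polynomial L) :=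
      twMatMul q (twMatMul q Vmat ΥL) Wmat with hΥ'L
    have hΥLmap : ΥL.map (Polynomial.map (algebraMap L F)) = ΥF := by
      refine Matrix.ext fun i j => ?_
      rw [hΥL, hΥF]
      simp only [Matrix.map_apply]
      rw [Polynomial.map_map]
      congr 1
    have hΥ'map : Υ'L.map (Polynomial.map (algebraMap L F)) = Υ'F := by
      rw [hΥ'L, map_twMatMul hq (algebraMap L F), map_twMatMul hq (algebraMap L F),
        hVmap, hWmap, hΥLmap, ← hcform]
    have hentry : ∀ i j : Fin n, (Υ'L i j).map (algebraMap L F) = Υ'F i j := by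
      intro i j
      have := congrArg (fun M => M i j) hΥ'map
      simpa [Matrix.map_apply] using this
    refine ⟨Υ'L, rfl, ?_, ?_, ?_⟩
    · intro i j hij
      apply hinj
      rw [Polynomial.map_zero, hentry i j, hLT' i j hij]
    · intro k
      apply hinj
      rw [hentry k k, hdiag' k, hD]
      rw [Polynomial.map_map]
      congr 1
    · intro a b hba
      have h1 : (Υ'L a b).natDegree = (Υ'F a b).natDegree := by
        rw [← hentry a b, Polynomial.natDegree_map (algebraMap L F)]
      rw [h1]
      have hab : (a : ℕ) - (b : ℕ) ≤ n := by omega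
      exact hbound a b hba hab
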